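/- The function h(w) = u(Gw; v) + s(Gw) + (\lambda/2)\|w\|_2^2 attains a minimum on \mathbb{R}^d, for any \lambda \geq 0. -/

import Mathlib

open Matrix Finset

/-- The regularized pricing objective `h(w) = u(Gw;v) + s(Gw) + (λ/2)‖w‖₂²`
attains a minimum on `ℝ^d`, for any `λ ≥ 0`. -/
theorem stmt_7 {N d : ℕ} [NeZero N] (H F : Set (Fin N → ℝ)) (v : Fin N → ℝ)
    (G : Matrix (Fin N) (Fin d) ℝ) (lam : ℝ) (hlam : 0 ≤ lam)
    (hHne : H.Nonempty) (hHcpt : IsCompact H) (hHconv : Convex ℝ H)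
    (hH0 : (0 : Fin N → ℝ) ∈ H)
    (hHbasis : ∀ i : Fin N, (Pi.single i 1 : Fin N → ℝ) ∈ H)
    (hFne : F.Nonempty) (hFcpt : IsCompact F) (hFconv : Convex ℝ F)
    (hF0 : (0 : Fin N → ℝ) ∈ F)
    (hFbasis : ∀ i : Fin N, (Pi.single i 1 : Fin N → ℝ) ∈ F)
    (u s : (Fin N → ℝ) → ℝ)
    (hu : ∀ p, u p = sSup ((fun q => (v - p) ⬝ᵥ q) '' H))
    (hs : ∀ p, s p = sSup ((fun q => p ⬝ᵥ q) '' F))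
    (h : (Fin d → ℝ) → ℝ)
    (hh : ∀ w, h w = u (G.mulVec w) + s (G.mulVec w) + (lam / 2) * ∑ j, (w j) ^ 2) :
    ∃ wbar : Fin d → ℝ, ∀ w : Fin d → ℝ, h wbar ≤ h w := by
  classical
  set f : (Fin N → ℝ) → ℝ := fun p => u p + s p with hf_def
  -- continuity of u and s
  have hu_cont : Continuous u := by
    have : Continuous fun p : Fin N → ℝ => sSup ((fun q => (v - p) ⬝ᵥ q) '' H) := by
      apply hHcpt.continuous_sSup
      simp only [Function.uncurry, dotProduct]
      fun_prop
    convert this using 1; exact funext hu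
  have hs_cont : Continuous s := by
    have : Continuous fun p : Fin N → ℝ => sSup ((fun q => p ⬝ᵥ q) '' F) := by
      apply hFcpt.continuous_sSup
      simp only [Function.uncurry, dotProduct]
      fun_prop
    convert this using 1; exact funext hs
  have hf_cont : Continuous f := hu_cont.add hs_cont
  -- bddAbove facts
  have hbddH : ∀ p : Fin N → ℝ, BddAbove ((fun q => (v - p) ⬝ᵥ q) '' H) := by
    intro p
    refine (hHcpt.image ?_).bddAbove
    simp only [dotProduct]; fun_prop
  have hbddF : ∀ p : Fin N → ℝ, BddAbove ((fun q => p ⬝ᵥ q) '' F) := by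
    intro p
    refine (hFcpt.image ?_).bddAbove
    simp only [dotProduct]; fun_prop
  -- lower bounds
  have hu0 : ∀ p, 0 ≤ u p := by
    intro p
    rw [hu]
    have : (0:ℝ) ∈ (fun q => (v - p) ⬝ᵥ q) '' H := ⟨0, hH0, by simp⟩
    simpa using le_csSup (hbddH p) this
  have hs0 : ∀ p, 0 ≤ s p := by
    intro p
    rw [hs]
    have : (0:ℝ) ∈ (fun q => p ⬝ᵥ q) '' F := ⟨0, hF0, by simp⟩
    simpa using le_csSup (hbddF p) this
  have hsi : ∀ p (i : Fin N), p i ≤ s p := by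
    intro p i
    rw [hs]
    have : p i ∈ (fun q => p ⬝ᵥ q) '' F := ⟨Pi.single i 1, hFbasis i, by simp⟩
    exact le_csSup (hbddF p) this
  have hui : ∀ p (i : Fin N), v i - p i ≤ u p := by
    intro p i
    rw [hu]
    have : v i - p i ∈ (fun q => (v - p) ⬝ᵥ q) '' H :=
      ⟨Pi.single i 1, hHbasis i, by simp [Pi.sub_apply]⟩
    exact le_csSup (hbddH p) this
  have hf0 : ∀ p, 0 ≤ f p := fun p => add_nonneg (hu0 p) (hs0 p)
  have hcoer : ∀ p (i : Fin N), |p i| ≤ f p + ‖v‖ := by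
    intro p i
    have hvi : |v i| ≤ ‖v‖ := by
      simpa using norm_le_pi_norm v i
    rcases le_or_gt 0 (p i) with hp | hp
    · rw [abs_of_nonneg hp]
      have h1 := hsi p i
      have h2 := hu0 p
      have hfp : f p = u p + s p := rfl
      nlinarith [abs_nonneg (v i)]
    · rw [abs_of_neg hp]
      have h1 := hui p i
      have h2 := hs0 p
      have h3 : -v i ≤ |v i| := neg_le_abs _
      have hfp : f p = u p + s p := rfl
      nlinarith
  have hnorm : ∀ p : Fin N → ℝ, f p ≤ f 0 → ‖p‖ ≤ f 0 + ‖v‖ := by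
    intro p hp
    have hR : 0 ≤ f 0 + ‖v‖ := add_nonneg (hf0 0) (norm_nonneg v)
    rw [pi_norm_le_iff_of_nonneg hR]
    intro i
    calc ‖p i‖ = |p i| := rfl
    _ ≤ f p + ‖v‖ := hcoer p i
    _ ≤ f 0 + ‖v‖ := by linarith
  -- continuity of mulVec
  have hmv_cont : Continuous fun w : Fin d → ℝ => G.mulVec w := by
    have := (G.mulVecLin : (Fin d → ℝ) →ₗ[ℝ] (Fin N → ℝ)).continuous_of_finiteDimensional
    exact this
  rcases eq_or_lt_of_le hlam with hlam0 | hlampos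
  · -- lam = 0 case
    have hh' : ∀ w, h w = f (G.mulVec w) := by
      intro w; rw [hh]; simp [← hlam0, hf_def]
    set S : Set (Fin N → ℝ) := ↑(LinearMap.range G.mulVecLin) with hS_def
    have hSclosed : IsClosed S :=
      (LinearMap.range G.mulVecLin).closed_of_finiteDimensional
    set T : Set (Fin N → ℝ) := S ∩ {p | f p ≤ f 0} with hT_def
    have hTclosed : IsClosed T := hSclosed.inter (isClosed_le hf_cont continuous_const)
    have hTbdd : Bornology.IsBounded T := by
      rw [isBounded_iff_forall_norm_le]
      exact ⟨f 0 + ‖v‖, fun p hp => hnorm p hp.2⟩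
    have hTcpt : IsCompact T := Metric.isCompact_of_isClosed_isBounded hTclosed hTbdd
    have hTne : T.Nonempty := by
      exact ⟨0, ⟨0, by simp⟩, show f 0 ≤ f 0 from le_refl _⟩
    obtain ⟨pbar, hpT, hmin⟩ := hTcpt.exists_isMinOn hTne hf_cont.continuousOn
    obtain ⟨wbar, hwbar⟩ := hpT.1
    refine ⟨wbar, fun w => ?_⟩
    rw [hh', hh']
    have hwbar' : G.mulVec wbar = pbar := by
      simpa [Matrix.mulVecLin_apply] using hwbar
    rw [hwbar']
    by_cases hc : f (G.mulVec w) ≤ f 0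
    · exact hmin ⟨⟨w, by simp [Matrix.mulVecLin_apply]⟩, hc⟩
    · have : f pbar ≤ f 0 := hpT.2
      linarith [not_le.mp hc]
  · -- lam > 0 case
    have hh_cont : Continuous h := by
      have : Continuous fun w : Fin d → ℝ =>
          f (G.mulVec w) + (lam / 2) * ∑ j, (w j) ^ 2 := by
        apply (hf_cont.comp hmv_cont).add
        fun_prop
      convert this using 1
      funext w; rw [hh]
    set T : Set (Fin d → ℝ) := {w | h w ≤ h 0} with hT_def
    have hTclosed : IsClosed T := isClosed_le hh_cont continuous_const
    have hh0nn : 0 ≤ h 0 := by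
      have e : h 0 = u (G.mulVec 0) + s (G.mulVec 0) + (lam/2) * ∑ j : Fin d, ((0:Fin d → ℝ) j)^2 := hh 0
      simp only [Pi.zero_apply] at e
      simp at e
      linarith [hu0 0, hs0 0, e.le, e.ge]
    have hTbdd : Bornology.IsBounded T := by
      rw [isBounded_iff_forall_norm_le]
      refine ⟨Real.sqrt (2 * h 0 / lam), fun w hw => ?_⟩
      have hsum : (lam / 2) * ∑ j, (w j) ^ 2 ≤ h 0 := by
        have := hh w
        have h1 : 0 ≤ u (G.mulVec w) := hu0 _
        have h2 : 0 ≤ s (G.mulVec w) := hs0 _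
        have hwle : h w ≤ h 0 := hw
        linarith
      have hsum' : ∑ j, (w j) ^ 2 ≤ 2 * h 0 / lam := by
        rw [le_div_iff₀ hlampos]
        nlinarith
      rw [pi_norm_le_iff_of_nonneg (Real.sqrt_nonneg _)]
      intro j
      have hj : (w j) ^ 2 ≤ ∑ j, (w j) ^ 2 := by
        apply Finset.single_le_sum (f := fun j => (w j)^2) (fun i _ => sq_nonneg _)
          (Finset.mem_univ j)
      calc ‖w j‖ = Real.sqrt ((w j) ^ 2) := by
            rw [Real.sqrt_sq_eq_abs]; rfl
      _ ≤ Real.sqrt (2 * h 0 / lam) := Real.sqrt_le_sqrt (le_trans hj hsum')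
    have hTcpt : IsCompact T := Metric.isCompact_of_isClosed_isBounded hTclosed hTbdd
    have hTne : T.Nonempty := ⟨0, show h 0 ≤ h 0 from le_refl _⟩
    obtain ⟨wbar, hwT, hmin⟩ := hTcpt.exists_isMinOn hTne hh_cont.continuousOn
    refine ⟨wbar, fun w => ?_⟩
    by_cases hc : h w ≤ h 0
    · exact hmin hc
    · exact le_trans hwT (le_of_lt (not_le.mp hc))
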